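/- Let p be an odd prime and let ℓ be the multiplicative order of 2 modulo p. Then: if ℓ is odd, f_2(p) ≤ (1/4)(p+1)(p−1)(1 + 1/ℓ) + 1; if ℓ ≡ 2 (mod 4), f_2(p) ≤ (1/4)(p+1)(p−1)(1 + 2/ℓ) + 1; and if ℓ ≡ 0 (mod 4), f_2(p) ≤ (1/4)(p+1)(p−1) + 1. -/

import Mathlib

/-- An `n`-ary `k`-radius sequence of length `m`: any two distinct alphabet symbols
occur within distance `k` of each other somewhere in the sequence. -/
def IsRadiusSeq (k n m : ℕ) (a : Fin m → Fin n) : Prop :=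
  ∀ x y : Fin n, x ≠ y →
    ∃ i j : Fin m, a i = x ∧ a j = y ∧ |(i.val : ℤ) - (j.val : ℤ)| ≤ (k : ℤ)

/-- `radiusMin k n` is `f_k(n)`, the shortest length of an `n`-ary `k`-radius sequence. -/
noncomputable def radiusMin (k n : ℕ) : ℕ :=
  sInf {m | ∃ a : Fin m → Fin n, IsRadiusSeq k n m a}


open Subgroup Finset

section Construct

variable {p : ℕ} [Fact p.Prime]

lemma radiusMin_le_of_diffs (hp3 : 3 ≤ p) (B : ℕ) (d : ℕ → ZMod p)
    (hcov : ∀ δ : ZMod p, δ ≠ 0 → ∃ q, q < B ∧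
      (δ = d q ∨ δ = -d q ∨ δ = 2 * d q ∨ δ = -(2 * d q))) :
    radiusMin 2 p ≤ B * (p + 1) + 1 := by
  haveI : NeZero p := ⟨by omega⟩
  set S : ℕ → ZMod p := fun q => ∑ j ∈ Finset.range q, d j with hS
  set b : ℕ → ZMod p := fun n => S (n / (p+1)) + ((n % (p+1) : ℕ) : ZMod p) * d (n / (p+1))
    with hbdef
  have hb : ∀ q t, t < p + 1 → b ((p+1) * q + t) = S q + (t : ZMod p) * d q := by
    intro q t ht
    simp only [hbdef]
    rw [Nat.mul_add_div (by omega), Nat.div_eq_of_lt ht, Nat.mul_add_mod,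
      Nat.mod_eq_of_lt ht, add_zero]
  -- helper 1 : distance-1 pairs
  have helper1 : ∀ q, q < B → d q ≠ 0 → ∀ x : ZMod p,
      ∃ i, i + 1 ≤ B * (p+1) ∧ b i = x ∧ b (i+1) = x + d q := by
    intro q hq hdq x
    set t : ℕ := ((x - S q) * (d q)⁻¹).val with htdef
    have ht : t < p := ZMod.val_lt _
    have htc : (t : ZMod p) = (x - S q) * (d q)⁻¹ := by
      rw [htdef, ZMod.natCast_val, ZMod.cast_id]
    refine ⟨(p+1) * q + t, ?_, ?_, ?_⟩
    · calc (p+1) * q + t + 1 ≤ (p+1) * q + (p+1) := by omega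
        _ = (p+1) * (q+1) := by ring
        _ ≤ (p+1) * B := Nat.mul_le_mul_left _ (by omega)
        _ = B * (p+1) := Nat.mul_comm _ _
    · rw [hb q t (by omega), htc]
      field_simp
      ring
    · have : (p+1) * q + t + 1 = (p+1) * q + (t+1) := by ring
      rw [this, hb q (t+1) (by omega)]
      push_cast
      rw [htc]
      field_simp
      ring
  -- helper 2 : distance ≤ 2 pairs for difference 2·d q
  have helper2 : ∀ q, q < B → d q ≠ 0 → ∀ x : ZMod p,
      ∃ i j, i ≤ j ∧ j ≤ i + 2 ∧ j ≤ B * (p+1) ∧ b i = x ∧ b j = x + 2 * d q := by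
    intro q hq hdq x
    set t : ℕ := ((x - S q) * (d q)⁻¹).val with htdef
    have ht : t < p := ZMod.val_lt _
    have htc : (t : ZMod p) = (x - S q) * (d q)⁻¹ := by
      rw [htdef, ZMod.natCast_val, ZMod.cast_id]
    have hbi : b ((p+1) * q + t) = x := by
      rw [hb q t (by omega), htc]; field_simp; ring
    by_cases hcase : t + 2 ≤ p
    · refine ⟨(p+1) * q + t, (p+1) * q + (t + 2), by omega, by omega, ?_, hbi, ?_⟩
      · calc (p+1) * q + (t+2) ≤ (p+1) * q + (p+1) := by omega
          _ = (p+1) * (q+1) := by ring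
          _ ≤ (p+1) * B := Nat.mul_le_mul_left _ (by omega)
          _ = B * (p+1) := Nat.mul_comm _ _
      · rw [hb q (t+2) (by omega)]
        push_cast
        rw [htc]
        field_simp
        ring
    · -- t = p - 1, use junction with next block
      have htp : t + 1 = p := by omega
      have hexp : (p+1) * (q + 1) = (p+1) * q + (p+1) := by ring
      refine ⟨(p+1) * q + t, (p+1) * (q + 1), by omega, by omega, ?_, hbi, ?_⟩
      · exact Nat.mul_le_mul_left _ (by omega) |>.trans_eq (Nat.mul_comm _ _)
      · have h0 : b ((p+1) * (q+1)) = S (q+1) + (0 : ZMod p) * d (q+1) := by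
          have := hb (q+1) 0 (by omega)
          simpa using this
        have hSsucc : S (q+1) = S q + d q := Finset.sum_range_succ d q
        rw [h0, zero_mul, add_zero, hSsucc]
        have htm1 : (t : ZMod p) = -1 := by
          have : ((t : ℕ) : ZMod p) = ((p : ℕ) : ZMod p) - 1 := by
            have h1 : (t : ℕ) + 1 = p := htp
            have := congrArg (fun n : ℕ => (n : ZMod p)) h1
            push_cast at this
            linear_combination this
          rw [this, ZMod.natCast_self]; ring
        rw [← hbi, hb q t (by omega), htm1]
        ring
  -- assemble
  set m : ℕ := B * (p + 1) + 1 with hm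
  have hcover : ∀ x y : ZMod p, x ≠ y → ∃ i j : ℕ,
      i ≤ B * (p+1) ∧ j ≤ B * (p+1) ∧ b i = x ∧ b j = y ∧ i ≤ j + 2 ∧ j ≤ i + 2 := by
    intro x y hxy
    have hδ : y - x ≠ 0 := sub_ne_zero.mpr (Ne.symm hxy)
    obtain ⟨q, hq, hcase⟩ := hcov (y - x) hδ
    rcases hcase with h | h | h | h
    · have hdq : d q ≠ 0 := fun h0 => hδ (h.trans h0)
      obtain ⟨i, hi, hbi, hbi1⟩ := helper1 q hq hdq x
      exact ⟨i, i+1, by omega, by omega, hbi, by rw [hbi1, ← h]; ring, by omega, by omega⟩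
    · have hdq : d q ≠ 0 := fun h0 => hδ (by rw [h, h0, neg_zero])
      obtain ⟨i, hi, hbi, hbi1⟩ := helper1 q hq hdq y
      refine ⟨i+1, i, by omega, by omega, ?_, hbi, by omega, by omega⟩
      rw [hbi1]
      have : y - x = -d q := h
      linear_combination this
    · have hdq : d q ≠ 0 := fun h0 => hδ (by rw [h, h0, mul_zero])
      obtain ⟨i, j, hij, hji, hjb, hbi, hbj⟩ := helper2 q hq hdq x
      exact ⟨i, j, by omega, hjb, hbi, by rw [hbj, ← h]; ring, by omega, by omega⟩
    · have hdq : d q ≠ 0 := fun h0 => hδ (by rw [h, h0, mul_zero, neg_zero])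
      obtain ⟨i, j, hij, hji, hjb, hbi, hbj⟩ := helper2 q hq hdq y
      refine ⟨j, i, hjb, by omega, ?_, hbi, by omega, by omega⟩
      rw [hbj]
      have : y - x = -(2 * d q) := h
      linear_combination this
  -- convert to Fin p valued sequence
  have hcardZ : Fintype.card (ZMod p) = p := ZMod.card p
  let e : ZMod p ≃ Fin p := Fintype.equivFinOfCardEq hcardZ
  have hmem : m ∈ {m | ∃ a : Fin m → Fin p, IsRadiusSeq 2 p m a} := by
    refine ⟨fun n => e (b n.val), ?_⟩
    intro x y hxy
    have hxy' : e.symm x ≠ e.symm y := fun h => hxy (by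
      have := congrArg e h; simpa using this)
    obtain ⟨i, j, hi, hj, hbi, hbj, h1, h2⟩ := hcover (e.symm x) (e.symm y) hxy'
    refine ⟨⟨i, by omega⟩, ⟨j, by omega⟩, ?_, ?_, ?_⟩
    · simp only [hbi, Equiv.apply_symm_apply]
    · simp only [hbj, Equiv.apply_symm_apply]
    · rw [abs_le]
      constructor <;> simp <;> omega
  calc radiusMin 2 p ≤ m := Nat.sInf_le hmem
    _ = B * (p+1) + 1 := hm

end Construct

open Subgroup Finset

section Part2

variable {p : ℕ} [Fact p.Prime]

lemma zpow_reduce {G : Type*} [Group G] (g : G) (hg : 0 < orderOf g) (a : ℤ) :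
    ∃ j : ℕ, j < orderOf g ∧ g ^ a = g ^ j := by
  set L := orderOf g with hL
  have hLZ : (0:ℤ) < (L:ℤ) := by exact_mod_cast hg
  have h2 : 0 ≤ a % (L:ℤ) := Int.emod_nonneg a (by omega)
  have h1 : a % (L:ℤ) < L := Int.emod_lt_of_pos a hLZ
  refine ⟨(a % (L:ℤ)).toNat, by omega, ?_⟩
  calc g ^ a = g ^ ((L:ℤ) * (a / (L:ℤ)) + a % (L:ℤ)) := by
        rw [Int.mul_ediv_add_emod a (L:ℤ)]
    _ = (g ^ (L:ℤ)) ^ (a / (L:ℤ)) * g ^ (a % (L:ℤ)) := by rw [zpow_add, zpow_mul]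
    _ = g ^ (a % (L:ℤ)) := by
        rw [zpow_natCast, pow_orderOf_eq_one, one_zpow, one_mul]
    _ = g ^ (((a % (L:ℤ)).toNat : ℤ)) := by rw [Int.toNat_of_nonneg h2]
    _ = g ^ ((a % (L:ℤ)).toNat) := zpow_natCast _ _

lemma neg_one_zpow_cases (c : ℤ) :
    ((-1 : (ZMod p)ˣ)) ^ c = 1 ∨ ((-1 : (ZMod p)ˣ)) ^ c = -1 := by
  have hsq : ((-1 : (ZMod p)ˣ)) ^ (2:ℤ) = 1 := by
    rw [zpow_two]; simp
  rcases Int.even_or_odd c with hc | hc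
  · left; exact Even.neg_one_zpow hc
  · right
    obtain ⟨t, ht⟩ := hc
    rw [ht, zpow_add, zpow_mul, hsq, one_zpow, one_mul, zpow_one]

lemma Hform (u2 x : (ZMod p)ˣ) (hx : x ∈ Subgroup.closure ({u2, -1} : Set (ZMod p)ˣ)) :
    ∃ j : ℕ, x = u2 ^ j ∨ x = -(u2 ^ j) := by
  obtain ⟨a, c, h⟩ := Subgroup.mem_closure_pair.mp hx
  obtain ⟨j, _, hjeq⟩ := zpow_reduce u2 (orderOf_pos u2) a
  refine ⟨j, ?_⟩
  rcases neg_one_zpow_cases (p := p) c with hc | hc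
  · left; rw [← h, hc, mul_one, hjeq]
  · right; rw [← h, hc, hjeq, mul_neg_one]

lemma pow_mod_pm (u2 : (ZMod p)ˣ) (M : ℕ) (hM0 : 0 < M)
    (hMpow : u2 ^ M = 1 ∨ u2 ^ M = -1) (j : ℕ) :
    ∃ j₀, j₀ < M ∧ (u2 ^ j = u2 ^ j₀ ∨ u2 ^ j = -(u2 ^ j₀)) := by
  have key : u2 ^ j = (u2 ^ M) ^ (j / M) * u2 ^ (j % M) := by
    rw [← pow_mul, ← pow_add, Nat.div_add_mod]
  refine ⟨j % M, Nat.mod_lt _ hM0, ?_⟩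
  rcases hMpow with h | h
  · left; rw [key, h, one_pow, one_mul]
  · rcases Nat.even_or_odd (j / M) with he | he
    · left; rw [key, h, he.neg_one_pow, one_mul]
    · right; rw [key, h, he.neg_one_pow, neg_one_mul]

lemma exists_diffs (u2 : (ZMod p)ˣ) (hu2 : (u2 : ZMod p) = 2)
    (M mm : ℕ) (hM0 : 0 < M) (hMle : M ≤ 2 * mm)
    (hMpow : u2 ^ M = 1 ∨ u2 ^ M = -1) :
    ∃ d : ℕ → ZMod p, ∀ δ : ZMod p, δ ≠ 0 → ∃ q, q <
        Nat.card ((ZMod p)ˣ ⧸ Subgroup.closure ({u2, -1} : Set (ZMod p)ˣ)) * mm ∧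
      (δ = d q ∨ δ = -d q ∨ δ = 2 * d q ∨ δ = -(2 * d q)) := by
  classical
  have hmm0 : 0 < mm := by omega
  set H := Subgroup.closure ({u2, -1} : Set (ZMod p)ˣ) with hH
  letI : Fintype ((ZMod p)ˣ ⧸ H) := Fintype.ofFinite _
  have hNF : Nat.card ((ZMod p)ˣ ⧸ H) = Fintype.card ((ZMod p)ˣ ⧸ H) :=
    Nat.card_eq_fintype_card
  set C := Fintype.card ((ZMod p)ˣ ⧸ H) with hC
  let eQ : Fin C ≃ ((ZMod p)ˣ ⧸ H) := (Fintype.equivFin _).symm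
  set d : ℕ → ZMod p := fun n => if h : n / mm < C
      then (((eQ ⟨n / mm, h⟩).out * u2 ^ (2 * (n % mm)) : (ZMod p)ˣ) : ZMod p) else 1
    with hd
  refine ⟨d, ?_⟩
  intro δ hδ
  set v : (ZMod p)ˣ := Units.mk0 δ hδ with hv
  set qv : (ZMod p)ˣ ⧸ H := QuotientGroup.mk v with hqv
  set r : (ZMod p)ˣ := qv.out with hr
  have hrin : r⁻¹ * v ∈ H := by
    rw [← QuotientGroup.eq]
    exact (QuotientGroup.out_eq' qv).trans hqv
  obtain ⟨j1, hj1⟩ := Hform u2 _ hrin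
  obtain ⟨j₀, hj₀M, hj₀⟩ := pow_mod_pm u2 M hM0 hMpow j1
  have hfix : v = r * (r⁻¹ * v) := by rw [mul_inv_cancel_left]
  have hv4 : v = r * u2 ^ j₀ ∨ v = -(r * u2 ^ j₀) := by
    rcases hj1 with h1 | h1 <;> rcases hj₀ with h2 | h2
    · left; rw [hfix, h1, h2]
    · right; rw [hfix, h1, h2, mul_neg]
    · right; rw [hfix, h1, h2, mul_neg]
    · left; rw [hfix, h1, h2, neg_neg]
  obtain ⟨i, hi, hipar⟩ : ∃ i, i < mm ∧ (j₀ = 2*i ∨ j₀ = 2*i+1) :=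
    ⟨j₀/2, by omega, by omega⟩
  set a : ℕ := (eQ.symm qv).val with ha
  have haC : a < C := (eQ.symm qv).is_lt
  set n : ℕ := mm * a + i with hn
  have hnlt : n < Nat.card ((ZMod p)ˣ ⧸ H) * mm := by
    rw [hNF]
    calc n < mm * a + mm := by omega
      _ = mm * (a + 1) := by ring
      _ ≤ mm * C := Nat.mul_le_mul_left _ (by omega)
      _ = C * mm := Nat.mul_comm _ _
  have hdiv : n / mm = a := by
    rw [hn, Nat.mul_add_div hmm0, Nat.div_eq_of_lt hi, add_zero]
  have hmod : n % mm = i := by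
    rw [hn, Nat.mul_add_mod, Nat.mod_eq_of_lt hi]
  have hdn : d n = ((r * u2 ^ (2 * i) : (ZMod p)ˣ) : ZMod p) := by
    simp only [hd]
    have hlt : n / mm < C := by rw [hdiv]; exact haC
    rw [dif_pos hlt]
    have hfin : (⟨n / mm, hlt⟩ : Fin C) = eQ.symm qv := Fin.ext (hdiv.trans ha)
    rw [hfin, hmod, Equiv.apply_symm_apply]
  have hδv : δ = (v : ZMod p) := (Units.val_mk0 hδ).symm
  refine ⟨n, hnlt, ?_⟩
  rcases hv4 with h4 | h4 <;> rcases hipar with hp' | hp'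
  · left
    rw [hδv, h4, hp', hdn]
  · right; right; left
    rw [hδv, h4, hp', hdn]
    simp only [Units.val_neg, Units.val_mul, Units.val_pow_eq_pow_val, hu2]
    ring
  · right; left
    rw [hδv, h4, hp', hdn]
    simp only [Units.val_neg, Units.val_mul, Units.val_pow_eq_pow_val, hu2]
  · right; right; right
    rw [hδv, h4, hp', hdn]
    simp only [Units.val_neg, Units.val_mul, Units.val_pow_eq_pow_val, hu2]
    ring

end Part2

open Subgroup

section Part3

variable {p : ℕ} [Fact p.Prime]

lemma closure_eq_zpowers (u2 : (ZMod p)ˣ) (hneg : (-1 : (ZMod p)ˣ) ∈ zpowers u2) :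
    Subgroup.closure ({u2, -1} : Set (ZMod p)ˣ) = zpowers u2 := by
  apply le_antisymm
  · rw [Subgroup.closure_le]
    rintro x (rfl | rfl)
    · exact mem_zpowers _
    · exact hneg
  · exact zpowers_le.mpr (Subgroup.subset_closure (by simp))

lemma card_H_of_not_mem (u2 : (ZMod p)ˣ) (hne : (-1 : (ZMod p)ˣ) ∉ zpowers u2) :
    Nat.card (Subgroup.closure ({u2, -1} : Set (ZMod p)ˣ)) = 2 * orderOf u2 := by
  set H := Subgroup.closure ({u2, -1} : Set (ZMod p)ˣ) with hH
  have hu2H : u2 ∈ H := Subgroup.subset_closure (by simp)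
  have hnegH : (-1 : (ZMod p)ˣ) ∈ H := Subgroup.subset_closure (by simp)
  have hKH : ∀ x ∈ zpowers u2, x ∈ H := by
    intro x hx
    obtain ⟨a, ha⟩ := Subgroup.mem_zpowers_iff.mp hx
    exact ha ▸ zpow_mem hu2H a
  let f : Bool × (zpowers u2) → H := fun s =>
    ⟨(if s.1 then -1 else 1) * s.2.1,
      mul_mem (by rcases s.1 <;> simp [hnegH, one_mem]) (hKH _ s.2.2)⟩
  have hbij : Function.Bijective f := by
    constructor
    · rintro ⟨s, x, hx⟩ ⟨t, y, hy⟩ h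
      simp only [f, Subtype.mk.injEq] at h
      have hmem : ∀ w z : (ZMod p)ˣ, w ∈ zpowers u2 → z ∈ zpowers u2 → w = -z → False := by
        intro w z hw hz hwz
        apply hne
        have : (-1 : (ZMod p)ˣ) = w * z⁻¹ := by rw [hwz]; simp
        rw [this]
        exact mul_mem hw (inv_mem hz)
      rcases s <;> rcases t <;> simp only [Bool.false_eq_true, if_true, if_false,
          one_mul, neg_mul, neg_neg] at h
      · simp [Prod.ext_iff, Subtype.ext_iff, h]
      · exact absurd (hmem x y hx hy (by rw [h])) (fun h' => h')
      · exact absurd (hmem y x hy hx (by rw [← h])) (fun h' => h')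
      · have : x = y := by
          have := congrArg (fun z => (-1 : (ZMod p)ˣ) * z) h
          simpa using this
        simp [Prod.ext_iff, Subtype.ext_iff, this]
    · rintro ⟨x, hx⟩
      obtain ⟨j, hj | hj⟩ := Hform u2 x hx
      · exact ⟨(false, ⟨u2 ^ j, pow_mem (mem_zpowers u2) j⟩), Subtype.ext (by simp [f, hj])⟩
      · exact ⟨(true, ⟨u2 ^ j, pow_mem (mem_zpowers u2) j⟩), Subtype.ext (by simp [f, hj])⟩
  calc Nat.card H = Nat.card (Bool × (zpowers u2)) :=
        (Nat.card_congr (Equiv.ofBijective f hbij)).symm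
    _ = Nat.card Bool * Nat.card (zpowers u2) := Nat.card_prod _ _
    _ = 2 * orderOf u2 := by rw [Nat.card_zpowers]; norm_num

lemma neg_one_eq_pow (u2 : (ZMod p)ˣ) (hp2 : (2 : ZMod p) ≠ 0)
    (hneg : (-1 : (ZMod p)ˣ) ∈ zpowers u2) :
    ∃ k, 0 < k ∧ u2 ^ k = -1 ∧ 2 * k = orderOf u2 := by
  obtain ⟨a, ha⟩ := Subgroup.mem_zpowers_iff.mp hneg
  obtain ⟨k, hk, hkeq⟩ := zpow_reduce u2 (orderOf_pos u2) a
  have hku : u2 ^ k = -1 := by rw [← hkeq, ha]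
  have hne1 : (1 : (ZMod p)ˣ) ≠ -1 := by
    intro h
    apply hp2
    have := congrArg (Units.val) h
    simp only [Units.val_one, Units.val_neg] at this
    linear_combination this
  have hk0 : 0 < k := by
    rcases Nat.eq_zero_or_pos k with rfl | h
    · exact absurd (by simpa using hku) hne1
    · exact h
  have hdvd : orderOf u2 ∣ 2 * k := by
    apply orderOf_dvd_of_pow_eq_one
    rw [mul_comm, pow_mul, hku]
    simp
  obtain ⟨c, hc⟩ := hdvd
  have hℓ0 : 0 < orderOf u2 := orderOf_pos u2
  have hc2 : c < 2 := by
    by_contra hcon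
    push_neg at hcon
    have h2 : orderOf u2 * 2 ≤ orderOf u2 * c := Nat.mul_le_mul_left _ hcon
    rw [← hc] at h2
    omega
  have hc0 : c ≠ 0 := by
    rintro rfl
    rw [Nat.mul_zero] at hc
    omega
  have hc1 : c = 1 := by omega
  rw [hc1, Nat.mul_one] at hc
  exact ⟨k, hk0, hku, hc⟩

end Part3

open Subgroup

theorem stmt_3 (p : ℕ) (hp : p.Prime) (hodd : Odd p) (ℓ : ℕ)
    (hℓ : ℓ = orderOf (2 : ZMod p)) :
    (Odd ℓ →
      (radiusMin 2 p : ℚ) ≤ (1 / 4) * ((p : ℚ) + 1) * ((p : ℚ) - 1) * (1 + 1 / (ℓ : ℚ)) + 1) ∧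
    (ℓ % 4 = 2 →
      (radiusMin 2 p : ℚ) ≤ (1 / 4) * ((p : ℚ) + 1) * ((p : ℚ) - 1) * (1 + 2 / (ℓ : ℚ)) + 1) ∧
    (ℓ % 4 = 0 →
      (radiusMin 2 p : ℚ) ≤ (1 / 4) * ((p : ℚ) + 1) * ((p : ℚ) - 1) + 1) := by
  haveI : Fact p.Prime := ⟨hp⟩
  have hp2 : p ≠ 2 := by
    rintro rfl
    rw [Nat.odd_iff] at hodd
    omega
  have hp3 : 3 ≤ p := by
    have := hp.two_le
    omega
  have h2ne : (2 : ZMod p) ≠ 0 := by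
    have h : ((2:ℕ) : ZMod p) ≠ 0 := by
      rw [Ne, ZMod.natCast_eq_zero_iff]
      intro hdvd
      have := Nat.le_of_dvd (by norm_num) hdvd
      omega
    simpa using h
  set u2 : (ZMod p)ˣ := Units.mk0 (2 : ZMod p) h2ne with hu2def
  have hu2 : (u2 : ZMod p) = 2 := rfl
  have hℓu : ℓ = orderOf u2 := by rw [hℓ, ← hu2, orderOf_units]
  have hℓ0 : 0 < ℓ := hℓu ▸ orderOf_pos u2
  set H := Subgroup.closure ({u2, -1} : Set (ZMod p)ˣ) with hHdef
  set N := Nat.card ((ZMod p)ˣ ⧸ H) with hNdef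
  have hcardU : Nat.card (ZMod p)ˣ = p - 1 := by
    rw [Nat.card_eq_fintype_card, ZMod.card_units_eq_totient, Nat.totient_prime hp]
  have hQH : N * Nat.card H = p - 1 := by
    rw [← hcardU, hNdef]
    exact (Subgroup.card_eq_card_quotient_mul_card_subgroup H).symm
  have hbound : ∀ M mm : ℕ, 0 < M → M ≤ 2 * mm → (u2 ^ M = 1 ∨ u2 ^ M = -1) →
      radiusMin 2 p ≤ (N * mm) * (p+1) + 1 := by
    intro M mm h1 h2 h3
    obtain ⟨d, hd⟩ := exists_diffs u2 hu2 M mm h1 h2 h3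
    exact radiusMin_le_of_diffs hp3 (N * mm) d hd
  obtain ⟨M, hM0, hMpow, hNM, hℓM⟩ :
      ∃ M, 0 < M ∧ (u2 ^ M = 1 ∨ u2 ^ M = -1) ∧ 2 * N * M = p - 1 ∧ (ℓ = 2 * M ∨ ℓ = M) := by
    by_cases hneg : (-1 : (ZMod p)ˣ) ∈ zpowers u2
    · have hHK : H = zpowers u2 := closure_eq_zpowers u2 hneg
      have hcardH : Nat.card H = ℓ := by rw [hHK, Nat.card_zpowers, hℓu]
      obtain ⟨k, hk0, hku, hkℓ⟩ := neg_one_eq_pow u2 h2ne hneg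
      rw [← hℓu] at hkℓ
      refine ⟨k, hk0, Or.inr hku, ?_, Or.inl hkℓ.symm⟩
      have : N * ℓ = p - 1 := by rw [← hcardH]; exact hQH
      calc 2 * N * k = N * (2 * k) := by ring
        _ = N * ℓ := by rw [hkℓ]
        _ = p - 1 := this
    · have hcardH : Nat.card H = 2 * ℓ := by
        rw [hHdef, card_H_of_not_mem u2 hneg, hℓu]
      refine ⟨ℓ, hℓ0, Or.inl (by rw [hℓu]; exact pow_orderOf_eq_one u2), ?_, Or.inr rfl⟩
      calc 2 * N * ℓ = N * (2 * ℓ) := by ring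
        _ = N * Nat.card H := by rw [hcardH]
        _ = p - 1 := hQH
  -- rational versions of the key facts
  have hp1 : (1:ℕ) ≤ p := by omega
  have hNMQ : 2 * (N:ℚ) * (M:ℚ) = (p:ℚ) - 1 := by
    have h1 := hNM
    zify [hp1] at h1
    exact_mod_cast h1
  have hfin : ∀ mm : ℕ, M ≤ 2 * mm → ∀ R : ℚ,
      ((N:ℚ) * mm * (p+1) + 1 ≤ R) → (radiusMin 2 p : ℚ) ≤ R := by
    intro mm hmm R hR
    have hb := hbound M mm hM0 hmm hMpow
    have : (radiusMin 2 p : ℚ) ≤ ((N * mm) * (p+1) + 1 : ℕ) := by exact_mod_cast hb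
    refine this.trans (le_trans (le_of_eq ?_) hR)
    push_cast
    ring
  have hpQ : (3:ℚ) ≤ (p:ℚ) := by exact_mod_cast hp3
  refine ⟨?_, ?_, ?_⟩
  · -- ℓ odd
    intro hoddℓ
    have hℓM' : ℓ = M := by
      rcases hℓM with h | h
      · rw [Nat.odd_iff] at hoddℓ; omega
      · exact h
    obtain ⟨k, hk⟩ := hoddℓ
    have hMk : M = 2 * k + 1 := by omega
    apply hfin (k + 1) (by omega)
    have hℓQ : (ℓ:ℚ) = 2 * (k:ℚ) + 1 := by exact_mod_cast congrArg (Nat.cast (R := ℚ)) hk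
    have hMQ : (M:ℚ) = 2 * (k:ℚ) + 1 := by exact_mod_cast congrArg (Nat.cast (R := ℚ)) hMk
    have hden : (2 * (k:ℚ) + 1) ≠ 0 := by positivity
    have hN : 2 * (N:ℚ) * (2 * (k:ℚ) + 1) = (p:ℚ) - 1 := by rw [← hMQ]; exact hNMQ
    have hpsub : (p:ℚ) = 2 * (N:ℚ) * (2 * (k:ℚ) + 1) + 1 := by linarith
    rw [hℓQ, hpsub]
    apply le_of_eq
    push_cast
    field_simp
    ring
  · -- ℓ ≡ 2 mod 4
    intro h4
    have hℓQ4 : (0:ℚ) < (ℓ:ℚ) := by exact_mod_cast hℓ0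
    rcases hℓM with h | h
    · -- ℓ = 2M, M odd
      obtain ⟨k, hk⟩ : ∃ k, M = 2 * k + 1 := ⟨M / 2, by omega⟩
      apply hfin (k + 1) (by omega)
      have hℓQ : (ℓ:ℚ) = 4 * (k:ℚ) + 2 := by
        have : ℓ = 4 * k + 2 := by omega
        exact_mod_cast congrArg (Nat.cast (R := ℚ)) this
      have hMQ : (M:ℚ) = 2 * (k:ℚ) + 1 := by exact_mod_cast congrArg (Nat.cast (R := ℚ)) hk
      have hN : 2 * (N:ℚ) * (2 * (k:ℚ) + 1) = (p:ℚ) - 1 := by rw [← hMQ]; exact hNMQ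
      have hpsub : (p:ℚ) = 2 * (N:ℚ) * (2 * (k:ℚ) + 1) + 1 := by linarith
      rw [hℓQ, hpsub]
      apply le_of_eq
      have hden : (4 * (k:ℚ) + 2) ≠ 0 := by positivity
      push_cast
      field_simp
      ring
    · -- ℓ = M even: N*mm = (p-1)/4
      obtain ⟨k, hk⟩ : ∃ k, M = 2 * k := ⟨M / 2, by omega⟩
      apply hfin k (by omega)
      have hMQ : (M:ℚ) = 2 * (k:ℚ) := by exact_mod_cast congrArg (Nat.cast (R := ℚ)) hk
      rw [hMQ] at hNMQ
      have hpsub : (p:ℚ) = 4 * (N:ℚ) * (k:ℚ) + 1 := by linear_combination -hNMQ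
      rw [hpsub]
      have hkey : (0:ℚ) ≤ ((N:ℚ) * (k:ℚ) * (4 * (N:ℚ) * (k:ℚ) + 2)) * (2 / (ℓ:ℚ)) := by
        positivity
      nlinarith [hkey]
  · -- ℓ ≡ 0 mod 4
    intro h4
    rcases hℓM with h | h
    · -- ℓ = 2M, M even
      obtain ⟨k, hk⟩ : ∃ k, M = 2 * k := ⟨M / 2, by omega⟩
      have hk0 : 0 < k := by omega
      apply hfin k (by omega)
      have hMQ : (M:ℚ) = 2 * (k:ℚ) := by exact_mod_cast congrArg (Nat.cast (R := ℚ)) hk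
      rw [hMQ] at hNMQ
      have hpsub : (p:ℚ) = 4 * (N:ℚ) * (k:ℚ) + 1 := by linear_combination -hNMQ
      rw [hpsub]
      apply le_of_eq
      ring
    · -- ℓ = M ≡ 0 mod 4
      obtain ⟨k, hk⟩ : ∃ k, M = 4 * k := ⟨M / 4, by omega⟩
      have hk0 : 0 < k := by omega
      apply hfin (2 * k) (by omega)
      have hMQ : (M:ℚ) = 4 * (k:ℚ) := by exact_mod_cast congrArg (Nat.cast (R := ℚ)) hk
      rw [hMQ] at hNMQ
      have hpsub : (p:ℚ) = 8 * (N:ℚ) * (k:ℚ) + 1 := by linear_combination -hNMQ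
      rw [hpsub]
      apply le_of_eq
      push_cast
      ring
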